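/- Let T, K, d be positive integers, let q_1, …, q_T be positive real numbers, let r ∈ ℝ^K, let c ∈ ℝ^{d×K}, and let B ≥ 0. Then the supremum of Σ_{t=1}^T q_t (r^⊤ x_t) over all families (x_1, …, x_T) with each x_t in the probability simplex Δ_K satisfying Σ_{t=1}^T q_t (c x_t) ≤ B·1_d componentwise equals the supremum of (Σ_{t=1}^T q_t)(r^⊤ u) over all u ∈ Δ_K satisfying (Σ_{t=1}^T q_t)(c u) ≤ B·1_d componentwise. -/
import Mathlib


open Finset

/-- The time-indexed LP and its aggregated single-variable relaxation
have the same optimal value (supremum). -/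
theorem lp_equivalence (T K d : ℕ) (hT : 0 < T) (hK : 0 < K) (hd : 0 < d)
    (q : Fin T → ℝ) (hq : ∀ t, 0 < q t)
    (r : Fin K → ℝ) (c : Fin d → Fin K → ℝ) (B : ℝ) (hB : 0 ≤ B) :
    sSup {y : ℝ | ∃ x : Fin T → Fin K → ℝ,
        (∀ t k, 0 ≤ x t k ∧ x t k ≤ 1) ∧ (∀ t, ∑ k, x t k = 1) ∧
        (∀ i, ∑ t, q t * ∑ k, c i k * x t k ≤ B) ∧
        y = ∑ t, q t * ∑ k, r k * x t k} =
    sSup {y : ℝ | ∃ u : Fin K → ℝ,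
        (∀ k, 0 ≤ u k ∧ u k ≤ 1) ∧ (∑ k, u k = 1) ∧
        (∀ i, (∑ t, q t) * ∑ k, c i k * u k ≤ B) ∧
        y = (∑ t, q t) * ∑ k, r k * u k} := by
  set Q : ℝ := ∑ t, q t with hQdef
  have hQ : 0 < Q := Finset.sum_pos (fun t _ => hq t) (by simp [Finset.univ_nonempty_iff, Fin.pos_iff_nonempty.mp hT])
  congr 1
  ext y
  constructor
  · rintro ⟨x, hx01, hxsum, hxc, rfl⟩
    refine ⟨fun k => (∑ t, q t * x t k) / Q, fun k => ?_, ?_, ?_, ?_⟩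
    · constructor
      · exact div_nonneg (Finset.sum_nonneg fun t _ => mul_nonneg (hq t).le (hx01 t k).1) hQ.le
      · rw [div_le_one hQ]
        exact Finset.sum_le_sum fun t _ => by
          nlinarith [(hx01 t k).2, (hq t).le]
    · rw [← Finset.sum_div, div_eq_one_iff_eq hQ.ne', Finset.sum_comm]
      exact Finset.sum_congr rfl fun t _ => by rw [← Finset.mul_sum, hxsum t, mul_one]
    all_goals {
      have key : ∀ f : Fin K → ℝ,
          Q * ∑ k, f k * ((∑ t, q t * x t k) / Q) = ∑ t, q t * ∑ k, f k * x t k := by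
        intro f
        rw [Finset.mul_sum]
        calc ∑ k, Q * (f k * ((∑ t, q t * x t k) / Q))
            = ∑ k, ∑ t, f k * (q t * x t k) := by
              refine Finset.sum_congr rfl fun k _ => ?_
              rw [eq_comm, ← Finset.mul_sum]
              field_simp
          _ = ∑ t, ∑ k, f k * (q t * x t k) := Finset.sum_comm
          _ = ∑ t, q t * ∑ k, f k * x t k := by
              refine Finset.sum_congr rfl fun t _ => ?_
              rw [Finset.mul_sum]
              exact Finset.sum_congr rfl fun k _ => by ring
      first
        | (intro i; rw [key (c i)]; exact hxc i)
        | (rw [key r])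
    }
  · rintro ⟨u, hu01, husum, huc, rfl⟩
    refine ⟨fun _ => u, fun t k => hu01 k, fun t => husum, ?_, ?_⟩
    · intro i
      rw [← Finset.sum_mul]
      exact huc i
    · rw [← Finset.sum_mul]
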